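/- Suppose each project valuation v_k is monotone with v_k(∅)=0, and |𝒩| = N ≥ 1. Let X be an allocation, and for each project k let a_k be a nonnegative additive function on 𝒩 with a_k(T) ≤ v_k(T) for all T ⊆ 𝒩 and a_k(X_k) = v_k(X_k). Fix ε > 0 and define payments by p_i = a_k({i}) + (ε/N)·SW(X) for each agent i ∈ X_k. Suppose there exist a project k and a nonempty set T ⊆ 𝒩 ∖ X_k with v_k(X_k ∪ T) − v_k(X_k) > Σ_{i∈T} p_i. Let X' be the allocation obtained from X by moving the agents of T to project k (X'_k = X_k ∪ T and X'_l = X_l ∖ T for l ≠ k). Then SW(X') > (1 + ε/N)·SW(X). -/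
import Mathlib


/-- A profitable best-response move increases the social welfare by at least a factor
`1 + ε/N`, when payments are XoS prices plus an `(ε/N)·SW(X)` markup. -/
theorem stmt12 {𝒩 P : Type*} [Fintype 𝒩] [DecidableEq 𝒩] [Fintype P] [DecidableEq P]
    (v : P → Finset 𝒩 → ℝ)
    (hzero : ∀ k, v k ∅ = 0)
    (hnonneg : ∀ k (T : Finset 𝒩), 0 ≤ v k T)
    (hmono : ∀ k (A B : Finset 𝒩), A ⊆ B → v k A ≤ v k B)
    (hN : 1 ≤ Fintype.card 𝒩)
    -- X is an allocation
    (X : P → Finset 𝒩)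
    (hdisj : ∀ k l, k ≠ l → Disjoint (X k) (X l))
    (hcover : Finset.univ.biUnion X = Finset.univ)
    -- a k is a nonnegative additive function dominated by v k and tight at X k
    (a : P → 𝒩 → ℝ)
    (ha0 : ∀ k i, 0 ≤ a k i)
    (hale : ∀ k (T : Finset 𝒩), ∑ i ∈ T, a k i ≤ v k T)
    (haeq : ∀ k, ∑ i ∈ X k, a k i = v k (X k))
    (ε : ℝ) (hε : 0 < ε)
    -- payments: XoS price plus markup
    (p : 𝒩 → ℝ)
    (hp : ∀ k, ∀ i ∈ X k,
      p i = a k i + ε / (Fintype.card 𝒩 : ℝ) * ∑ l, v l (X l))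
    -- a strictly profitable deviation of T to project k
    (k : P) (T : Finset 𝒩) (hT : T.Nonempty) (hTX : Disjoint T (X k))
    (hdev : ∑ i ∈ T, p i < v k (X k ∪ T) - v k (X k)) :
    -- moving T to project k increases welfare by a factor more than 1 + ε/N
    (1 + ε / (Fintype.card 𝒩 : ℝ)) * ∑ l, v l (X l) <
      ∑ l, v l (if l = k then X k ∪ T else X l \ T) := by

  classical
  set N : ℝ := (Fintype.card 𝒩 : ℝ) with hNdef
  have hN0 : (0:ℝ) < N := by
    rw [hNdef]
    exact_mod_cast hN
  set S : ℝ := ∑ l, v l (X l) with hS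
  have hS0 : 0 ≤ S := Finset.sum_nonneg fun l _ => hnonneg l _
  set μ : ℝ := ε / N * S with hμ
  have hμ0 : 0 ≤ μ := mul_nonneg (div_nonneg hε.le hN0.le) hS0
  -- partition of T by the allocation
  have hTpart : T = Finset.univ.biUnion (fun l => T ∩ X l) := by
    ext i
    simp only [Finset.mem_biUnion, Finset.mem_inter, Finset.mem_univ, true_and]
    constructor
    · intro hi
      have hmem : i ∈ Finset.univ.biUnion X := by rw [hcover]; exact Finset.mem_univ i
      obtain ⟨l, _, hl⟩ := Finset.mem_biUnion.mp hmem
      exact ⟨l, hi, hl⟩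
    · rintro ⟨l, hi, _⟩; exact hi
  have hd : ∀ l ∈ Finset.univ, ∀ l' ∈ Finset.univ, l ≠ l' →
      Disjoint (T ∩ X l) (T ∩ X (l' : P)) := fun l _ l' _ h =>
    (hdisj l l' h).mono Finset.inter_subset_right Finset.inter_subset_right
  have hcard : (∑ l, ((T ∩ X l).card : ℝ)) = (T.card : ℝ) := by
    have : T.card = ∑ l, (T ∩ X l).card := by
      conv_lhs => rw [hTpart]
      rw [Finset.card_biUnion hd]
    rw [this]; push_cast; ring
  have hsump : ∑ i ∈ T, p i = (∑ l, ∑ i ∈ T ∩ X l, a l i) + (T.card : ℝ) * μ := by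
    conv_lhs => rw [hTpart]
    rw [Finset.sum_biUnion hd]
    have : ∀ l ∈ Finset.univ,
        ∑ i ∈ T ∩ X l, p i = (∑ i ∈ T ∩ X l, a l i) + ((T ∩ X l).card : ℝ) * μ := by
      intro l _
      rw [Finset.sum_congr rfl (fun i hi => hp l i (Finset.mem_inter.mp hi).2)]
      rw [Finset.sum_add_distrib, Finset.sum_const, nsmul_eq_mul]
    rw [Finset.sum_congr rfl this, Finset.sum_add_distrib, ← Finset.sum_mul, hcard]
  have hTk : T ∩ X k = ∅ := Finset.disjoint_iff_inter_eq_empty.mp hTX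
  have hA : (∑ l, ∑ i ∈ T ∩ X l, a l i) =
      ∑ l ∈ Finset.univ.erase k, ∑ i ∈ T ∩ X l, a l i := by
    rw [← Finset.add_sum_erase _ _ (Finset.mem_univ k), hTk]
    simp
  -- per-project lower bound
  have hlb : ∀ l, v l (X l) - (∑ i ∈ T ∩ X l, a l i) ≤ v l (X l \ T) := by
    intro l
    have hsub : X l ∩ T ⊆ X l := Finset.inter_subset_left
    have h1 : (∑ i ∈ X l \ (X l ∩ T), a l i) + (∑ i ∈ X l ∩ T, a l i)
        = ∑ i ∈ X l, a l i := Finset.sum_sdiff hsub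
    have h2 : X l \ (X l ∩ T) = X l \ T := by
      ext i; simp only [Finset.mem_sdiff, Finset.mem_inter]; tauto
    have h3 : (∑ i ∈ X l ∩ T, a l i) = ∑ i ∈ T ∩ X l, a l i := by
      rw [Finset.inter_comm]
    have h4 : (∑ i ∈ X l \ T, a l i) ≤ v l (X l \ T) := hale l _
    rw [h2, h3, haeq l] at h1
    linarith
  have hlbsum : (∑ l ∈ Finset.univ.erase k, v l (X l)) -
      (∑ l ∈ Finset.univ.erase k, ∑ i ∈ T ∩ X l, a l i) ≤
      ∑ l ∈ Finset.univ.erase k, v l (X l \ T) := by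
    rw [← Finset.sum_sub_distrib]
    exact Finset.sum_le_sum fun l _ => hlb l
  have hSsplit : S = v k (X k) + ∑ l ∈ Finset.univ.erase k, v l (X l) := by
    rw [hS, ← Finset.add_sum_erase _ _ (Finset.mem_univ k)]
  have hrhs : (∑ l, v l (if l = k then X k ∪ T else X l \ T)) =
      v k (X k ∪ T) + ∑ l ∈ Finset.univ.erase k, v l (X l \ T) := by
    rw [← Finset.add_sum_erase _ (fun l => v l (if l = k then X k ∪ T else X l \ T))
      (Finset.mem_univ k)]
    simp only [if_pos rfl]
    congr 1
    refine Finset.sum_congr rfl fun l hl => ?_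
    rw [if_neg (Finset.mem_erase.mp hl).1]
  have hcard1 : (1:ℝ) ≤ (T.card : ℝ) := by
    have := Finset.card_pos.mpr hT
    exact_mod_cast this
  have hμT : μ ≤ (T.card : ℝ) * μ := le_mul_of_one_le_left hμ0 hcard1
  have hlhs : (1 + ε / N) * S = S + μ := by rw [hμ]; ring
  rw [hrhs, hlhs]
  rw [hsump, hA] at hdev
  linarith
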